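/- Let (X, 𝒜, m) be a measure space and let p, q : X → ℝ be measurable and integrable with p(x) > 0 for m-almost every x, |q(x) − p(x)| ≤ p(x)/2 for m-almost every x, and ∫ p dm = ∫ q dm. Then the function p · log(p/q) is integrable and ∫ p(x) · log( p(x)/q(x) ) dm(x) ≤ ∫ (q(x) − p(x))² / p(x) dm(x). -/

import Mathlib

open MeasureTheory

lemma key_log_lb {t : ℝ} (h1 : 1/2 ≤ t) (h2 : t ≤ 3/2) :
    t - 1 - (t - 1)^2 ≤ Real.log t := by
  have ht : 0 < t := by linarith
  rcases le_or_gt 1 t with h | h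
  · have hinv : Real.log (1/t) ≤ 1/t - 1 := Real.log_le_sub_one_of_pos (by positivity)
    rw [one_div, Real.log_inv] at hinv
    have hlog : 1 - t⁻¹ ≤ Real.log t := by linarith
    have htinv : t * t⁻¹ = 1 := mul_inv_cancel₀ ht.ne'
    have hcube : 0 ≤ (t-1)^3 := pow_nonneg (by linarith) 3
    nlinarith [hcube, htinv, ht]
  · set f : ℝ → ℝ := fun s => Real.log s - (s - 1) + (s - 1)^2 with hf
    have hd : ∀ s : ℝ, 0 < s → HasDerivAt f (s⁻¹ - 1 + 2*(s-1)) s := by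
      intro s hs0
      have h1 := Real.hasDerivAt_log hs0.ne'
      have h2 : HasDerivAt (fun s : ℝ => s - 1) 1 s := (hasDerivAt_id s).sub_const 1
      have h3 : HasDerivAt (fun s : ℝ => (s - 1)^2) (2*(s-1)) s := by
        simpa using h2.fun_pow 2
      simpa using (h1.fun_sub h2).fun_add h3
    have hanti : AntitoneOn f (Set.Icc (1/2 : ℝ) 1) := by
      apply antitoneOn_of_deriv_nonpos (convex_Icc _ _)
      · intro s hs
        exact ((hd s (by simp at hs; linarith [hs.1])).continuousAt).continuousWithinAt
      · intro s hs
        rw [interior_Icc] at hs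
        exact (hd s (by linarith [hs.1])).differentiableAt.differentiableWithinAt
      · intro s hs
        rw [interior_Icc] at hs
        have hs0 : (0:ℝ) < s := by linarith [hs.1]
        rw [(hd s hs0).deriv]
        have e : s⁻¹ - 1 + 2*(s-1) = (1 - s + 2*(s-1)*s)/s := by field_simp
        rw [e]
        apply div_nonpos_of_nonpos_of_nonneg _ hs0.le
        nlinarith [hs.1, hs.2]
    have := hanti (Set.mem_Icc.2 ⟨h1, h.le⟩) (Set.mem_Icc.2 ⟨by norm_num, le_refl 1⟩) h.le
    simp only [hf] at this
    simp at this
    linarith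

/-- Kullback–Leibler bound: for densities `p, q` with `p > 0` a.e.,
`|q − p| ≤ p/2` a.e. and `∫ p = ∫ q`, the function `p log(p/q)` is integrable and
`∫ p log(p/q) ≤ ∫ (q − p)²/p`. -/
theorem stmt_9 {X : Type*} [MeasurableSpace X] (m : Measure X) (p q : X → ℝ)
    (hpm : Measurable p) (hqm : Measurable q)
    (hpi : Integrable p m) (hqi : Integrable q m)
    (hppos : ∀ᵐ x ∂m, 0 < p x)
    (hclose : ∀ᵐ x ∂m, |q x - p x| ≤ p x / 2)
    (hmass : ∫ x, p x ∂m = ∫ x, q x ∂m) :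
    Integrable (fun x => p x * Real.log (p x / q x)) m ∧
      ∫ x, p x * Real.log (p x / q x) ∂m ≤ ∫ x, (q x - p x) ^ 2 / p x ∂m := by

  -- pointwise bounds
  have hbound : ∀ᵐ x ∂m,
      p x * Real.log (p x / q x) ≤ -(q x - p x) + (q x - p x)^2 / p x ∧
      -(q x - p x) ≤ p x * Real.log (p x / q x) ∧
      (q x - p x)^2 / p x ≤ p x / 4 := by
    filter_upwards [hppos, hclose] with x hp hc
    obtain ⟨hc1, hc2⟩ := abs_le.1 hc
    have hq : 0 < q x := by linarith
    have ht1 : 1/2 ≤ q x / p x := by rw [le_div_iff₀ hp]; linarith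
    have ht2 : q x / p x ≤ 3/2 := by rw [div_le_iff₀ hp]; linarith
    have key := key_log_lb ht1 ht2
    have hls : Real.log (q x / p x) ≤ q x / p x - 1 :=
      Real.log_le_sub_one_of_pos (by positivity)
    have hswap : p x * Real.log (p x / q x) = -(p x * Real.log (q x / p x)) := by
      rw [Real.log_div hp.ne' hq.ne', Real.log_div hq.ne' hp.ne']; ring
    have e1 : p x * (q x / p x - 1 - (q x / p x - 1)^2)
        = (q x - p x) - (q x - p x)^2 / p x := by field_simp
    have e2 : p x * (q x / p x - 1) = q x - p x := by field_simp
    refine ⟨?_, ?_, ?_⟩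
    · rw [hswap]
      have := mul_le_mul_of_nonneg_left key hp.le
      rw [e1] at this
      linarith
    · rw [hswap]
      have := mul_le_mul_of_nonneg_left hls hp.le
      rw [e2] at this
      linarith
    · rw [div_le_div_iff₀ hp (by norm_num : (0:ℝ) < 4)]
      nlinarith [sq_le_sq' (by linarith : -(p x / 2) ≤ q x - p x) hc2]
  have hmeas : AEStronglyMeasurable (fun x => p x * Real.log (p x / q x)) m :=
    (hpm.mul ((hpm.div hqm).log)).aestronglyMeasurable
  have hgint : Integrable (fun x => |q x - p x| + p x / 4) m :=
    (hqi.sub hpi).abs.add (hpi.div_const 4)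
  have hfint : Integrable (fun x => p x * Real.log (p x / q x)) m := by
    refine hgint.mono' hmeas ?_
    filter_upwards [hbound, hppos] with x ⟨hub, hlb, hsq⟩ hp
    rw [Real.norm_eq_abs, abs_le]
    constructor
    · linarith [le_abs_self (q x - p x)]
    · linarith [neg_le_abs (q x - p x)]
  have h2meas : AEStronglyMeasurable (fun x => (q x - p x)^2 / p x) m :=
    (((hqm.sub hpm).pow_const 2).div hpm).aestronglyMeasurable
  have h2int : Integrable (fun x => (q x - p x)^2 / p x) m := by
    refine (hpi.div_const 4).mono' h2meas ?_
    filter_upwards [hbound, hppos] with x ⟨_, _, hsq⟩ hp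
    rw [Real.norm_eq_abs, abs_of_nonneg (by positivity)]
    exact hsq
  refine ⟨hfint, ?_⟩
  have hneg : Integrable (fun x => -(q x - p x)) m := (hqi.sub hpi).neg
  have hhint : Integrable (fun x => -(q x - p x) + (q x - p x)^2 / p x) m :=
    hneg.add h2int
  have hle := integral_mono_ae hfint hhint (hbound.mono fun x hx => hx.1)
  rw [integral_add hneg h2int, integral_neg, integral_sub hqi hpi] at hle
  rw [hmass] at hle
  simpa using hle
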